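/- Let a, b ≥ 2 be integers, let k ≤ 0 be an integer, and set g = gcd(a-1, b). Then D_chain(a, b, k) = g · (D_F((a-1)/g, b/g, k) + 1). -/

import Mathlib

/-- `D_F(e,f,k)`: the rank of `SH^{2k}` of the Milnor fiber of the Fermat-type
singularity `x₁²+x₂²+x₃^e+x₄^f`, where `q` is the unique integer with
`0 ≤ q < e+f` and `min(e,f)·(1-k) ≡ q (mod e+f)`. -/
def DFermat (e f k : ℤ) : ℤ :=
  let q := (min e f * (1 - k)) % (e + f)
  if q = 0 then (Int.gcd e f : ℤ) - 1
  else if q ≤ min e f then q - 1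
  else if q ≤ max e f then min e f - 1
  else e + f - q - 1

/-- `D_chain(a,b,k)`: the rank of `SH^{2k}` of the Milnor fiber of the dual of the
chain-type polynomial `x₁²+x₂²+x₃^a x₄+x₄^b`, where `q` is the unique integer with
`0 ≤ q < a-1+b` and `(a-1)(1-k) ≡ q (mod a-1+b)`. -/
def Dchain (a b k : ℤ) : ℤ :=
  let q := ((a - 1) * (1 - k)) % (a - 1 + b)
  if q = 0 then (Int.gcd (a - 1) b : ℤ)
  else if q ≤ min (a - 1) b then q
  else if q ≤ max (a - 1) b then min (a - 1) b
  else (a - 1 + b) - q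

/-- Proposition 4.17 (i): `D_chain(a,b,k) = g·(D_F((a-1)/g, b/g, k) + 1)` where
`g = gcd(a-1,b)`. -/
theorem Dchain_eq_gcd_mul_DFermat (a b k : ℤ) (ha : 2 ≤ a) (hb : 2 ≤ b) (hk : k ≤ 0) :
    Dchain a b k =
      (Int.gcd (a - 1) b : ℤ) *
        (DFermat ((a - 1) / (Int.gcd (a - 1) b : ℤ)) (b / (Int.gcd (a - 1) b : ℤ)) k + 1) := by
  have hgn : 0 < Int.gcd (a - 1) b := Int.gcd_pos_of_ne_zero_left b (by omega)
  set g : ℤ := (Int.gcd (a - 1) b : ℤ) with hgdef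
  have hg0 : 0 < g := by rw [hgdef]; exact_mod_cast hgn
  obtain ⟨e, he⟩ : g ∣ a - 1 := Int.gcd_dvd_left _ _
  obtain ⟨f, hf⟩ : g ∣ b := Int.gcd_dvd_right _ _
  have hde : (a - 1) / g = e := by rw [he, Int.mul_ediv_cancel_left _ hg0.ne']
  have hdf : b / g = f := by rw [hf, Int.mul_ediv_cancel_left _ hg0.ne']
  have hcop : Int.gcd e f = 1 := by
    have h := Int.gcd_div_gcd_div_gcd hgn
    rwa [← hgdef, hde, hdf] at h
  have he1 : 1 ≤ e := by
    by_contra h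
    push_neg at h
    nlinarith [mul_nonpos_of_nonneg_of_nonpos hg0.le (by omega : e ≤ 0)]
  have hf1 : 1 ≤ f := by
    by_contra h
    push_neg at h
    nlinarith [mul_nonpos_of_nonneg_of_nonpos hg0.le (by omega : f ≤ 0)]
  rw [hde, hdf]
  simp only [Dchain, DFermat, ← hgdef]
  rw [he, hf, show g * e + g * f = g * (e + f) from by ring]
  rcases le_or_gt e f with hef | hef
  · -- case e ≤ f
    have hmin : min (g * e) (g * f) = g * e := min_eq_left ((mul_le_mul_iff_right₀ hg0).mpr hef)
    have hmax : max (g * e) (g * f) = g * f := max_eq_right ((mul_le_mul_iff_right₀ hg0).mpr hef)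
    rw [hmin, hmax, min_eq_left hef, max_eq_right hef, hcop,
      show g * e * (1 - k) = g * (e * (1 - k)) from by ring,
      Int.mul_emod_mul_of_pos _ _ hg0]
    simp only [mul_eq_zero, hg0.ne', false_or, mul_le_mul_iff_right₀ hg0, Nat.cast_one]
    split_ifs <;> first | ring1 | omega | (congr 1; omega)
  · -- case f < e
    have hmin : min (g * e) (g * f) = g * f := min_eq_right ((mul_le_mul_iff_right₀ hg0).mpr hef.le)
    have hmax : max (g * e) (g * f) = g * e := max_eq_left ((mul_le_mul_iff_right₀ hg0).mpr hef.le)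
    rw [hmin, hmax, min_eq_right hef.le, max_eq_left hef.le, hcop]
    set Q := f * (1 - k) % (e + f) with hQ
    set x := g * e * (1 - k) with hx
    have hef0 : (0 : ℤ) < e + f := by omega
    have hQ0 : 0 ≤ Q := Int.emod_nonneg _ hef0.ne'
    have hQlt : Q < e + f := Int.emod_lt_of_pos _ hef0
    have hm0 : (0 : ℤ) < g * (e + f) := by positivity
    have hx0 : 0 ≤ x % (g * (e + f)) := Int.emod_nonneg _ hm0.ne'
    have hxlt : x % (g * (e + f)) < g * (e + f) := Int.emod_lt_of_pos _ hm0
    have hbq : (g * (f * (1 - k))) % (g * (e + f)) = g * Q := Int.mul_emod_mul_of_pos _ _ hg0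
    have hsum : (x % (g * (e + f)) + g * Q) % (g * (e + f)) = 0 := by
      rw [← hbq, ← Int.add_emod,
        show x + g * (f * (1 - k)) = (g * (e + f)) * (1 - k) from by rw [hx]; ring,
        Int.mul_emod_right]
    obtain ⟨c, hc⟩ := Int.dvd_of_emod_eq_zero hsum
    have hgQ : g * Q < g * (e + f) := (mul_lt_mul_iff_right₀ hg0).mpr hQlt
    have hgQ0 : 0 ≤ g * Q := mul_nonneg hg0.le hQ0
    have hc01 : c = 0 ∨ c = 1 := by
      by_contra hcon
      push_neg at hcon
      rcases (by omega : c ≤ -1 ∨ 2 ≤ c) with h | h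
      · linarith [mul_le_mul_of_nonneg_left h hm0.le]
      · linarith [mul_le_mul_of_nonneg_left h hm0.le]
    rcases hc01 with rfl | rfl
    · have h3 : g * Q = 0 := by linarith [hc]
      have h2 : Q = 0 := by
        rcases mul_eq_zero.mp h3 with h | h
        · exact absurd h hg0.ne'
        · exact h
      have h1 : x % (g * (e + f)) = 0 := by linarith [hc]
      rw [h1, h2]
      norm_num
    · have h1 : Q ≠ 0 := by
        intro h0
        rw [h0, mul_zero, add_zero, mul_one] at hc
        exact absurd hc hxlt.ne
      have hq : x % (g * (e + f)) = g * ((e + f) - Q) := by linarith [hc]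
      rw [hq]
      simp only [mul_eq_zero, hg0.ne', false_or, mul_le_mul_iff_right₀ hg0, Nat.cast_one]
      clear_value Q x
      clear hQ hx hbq hsum hc hq hx0 hxlt hgQ hgQ0 hm0 he hf hde hdf hcop hgdef hgn
      split_ifs <;> first | ring1 | (congr 1; omega) | (exfalso; omega)
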